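/- The family of Lascoux atoms {L_γ : γ a weak composition with n parts} is linearly independent over ℤ[β]: if c_γ ∈ ℤ[β] are almost all zero and Σ_γ c_γ L_γ = 0 in ℤ[β][x_1,…,x_n], then c_γ = 0 for every γ. -/

import Mathlib

open Finset MvPolynomial

/-- The inversion-triple condition on anchor values `b, a, c`:
`b > c ≥ a` or `c ≥ a > b`. -/
def InvTriple (b a c : ℕ) : Prop := (c < b ∧ a ≤ c) ∨ (a ≤ c ∧ b < a)

/-- A set-valued skyline filling of shape `γ` (row `i : Fin n` is the `(i+1)`-st row) with
basement `b_i = i`: box `(i, j)` for `1 ≤ j ≤ γ i` carries a nonempty finite set of positive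
integers, box `(i, 0)` is the basement `{i + 1}`, and boxes outside the shape are empty. -/
structure SVFilling (n : ℕ) (γ : Fin n → ℕ) where
  box : Fin n → ℕ → Finset ℕ
  basement : ∀ i : Fin n, box i 0 = {(i : ℕ) + 1}
  nonempty : ∀ i : Fin n, ∀ j : ℕ, 1 ≤ j → j ≤ γ i → (box i j).Nonempty
  pos : ∀ i : Fin n, ∀ j : ℕ, ∀ e ∈ box i j, 1 ≤ e
  outside : ∀ i : Fin n, ∀ j : ℕ, γ i < j → box i j = ∅

namespace SVFilling

variable {n : ℕ} {γ : Fin n → ℕ}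

/-- The anchor (= largest) entry of box `(i, j)`. -/
def anchor (F : SVFilling n γ) (i : Fin n) (j : ℕ) : ℕ := (F.box i j).sup id

/-- Semistandardness conditions (S1)-(S4). -/
def IsSemistandard (F : SVFilling n γ) : Prop :=
  (∀ j : ℕ, 1 ≤ j → ∀ i i' : Fin n, i ≠ i' → ∀ e : ℕ, e ∈ F.box i j → e ∉ F.box i' j) ∧
  (∀ i : Fin n, ∀ j : ℕ, 1 ≤ j → j ≤ γ i →
      ∀ a ∈ F.box i (j - 1), ∀ b ∈ F.box i j, b ≤ a) ∧
  (∀ i i' : Fin n, i < i' →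
      (γ i' ≤ γ i → ∀ m : ℕ, m + 1 ≤ γ i' →
        InvTriple (F.anchor i' (m + 1)) (F.anchor i (m + 1)) (F.anchor i m)) ∧
      (γ i < γ i' → ∀ m : ℕ, m ≤ γ i → m + 1 ≤ γ i' →
        InvTriple (F.anchor i m) (F.anchor i' (m + 1)) (F.anchor i' m))) ∧
  (∀ i : Fin n, ∀ j : ℕ, 1 ≤ j → j ≤ γ i → ∀ e ∈ F.box i j, e ≠ F.anchor i j →
      ∀ i' : Fin n, i' < i → j ≤ γ i' →
        ¬ (e < F.anchor i' j ∧ (j = γ i' ∨ F.anchor i' (j + 1) ≤ e)))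

/-- `F.content v` is the number of (non-basement) boxes of `F` containing the value `v`. -/
def content (F : SVFilling n γ) (v : ℕ) : ℕ :=
  ∑ i : Fin n, ((Finset.Icc 1 (γ i)).filter (fun j => v ∈ F.box i j)).card

/-- `|F|`, the total number of entries of `F` (with multiplicity over boxes). -/
def size (F : SVFilling n γ) : ℕ :=
  ∑ i : Fin n, ∑ j ∈ Finset.Icc 1 (γ i), (F.box i j).card

/-- `F` has content the weak composition `δ` with `n` parts. -/
def HasContent (F : SVFilling n γ) (δ : Fin n → ℕ) : Prop :=
  (∀ i : Fin n, F.content ((i : ℕ) + 1) = δ i) ∧ ∀ v : ℕ, n < v → F.content v = 0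

end SVFilling

/-- The (combinatorial) Lascoux atom `L_γ ∈ ℤ[β][x_1, …, x_n]`, where `β` is the polynomial
variable of `ℤ[β] = Polynomial ℤ`. -/
noncomputable def Lascoux (n : ℕ) (γ : Fin n → ℕ) : MvPolynomial (Fin n) (Polynomial ℤ) :=
  ∑ᶠ F : {F : SVFilling n γ // F.IsSemistandard},
    MvPolynomial.monomial
      (Finsupp.equivFunOnFinite.symm
        (fun i : Fin n => (F : SVFilling n γ).content ((i : ℕ) + 1)))
      (Polynomial.X ^ ((F : SVFilling n γ).size - ∑ i, γ i))


namespace SVFilling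

variable {n : ℕ} {γ : Fin n → ℕ}

-- entry bound
lemma entry_le (F : SVFilling n γ) (hF : F.IsSemistandard) (i : Fin n) :
    ∀ j, j ≤ γ i → ∀ e ∈ F.box i j, e ≤ (i : ℕ) + 1 := by
  intro j
  induction j with
  | zero =>
    intro _ e he
    rw [F.basement] at he
    simp only [Finset.mem_singleton] at he
    omega
  | succ j ih =>
    intro hj e he
    obtain ⟨a, ha⟩ : (F.box i j).Nonempty := by
      rcases Nat.eq_zero_or_pos j with h0 | h0
      · subst h0; rw [F.basement]; exact ⟨_, Finset.mem_singleton_self _⟩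
      · exact F.nonempty i j h0 (by omega)
    have h2 := hF.2.1 i (j + 1) (by omega) hj a (by simpa using ha) e he
    exact le_trans h2 (ih (by omega) a ha)

lemma box_injective : Function.Injective (SVFilling.box (n := n) (γ := γ)) := by
  intro F G h
  cases F; cases G; simpa using h

instance : Finite {F : SVFilling n γ // F.IsSemistandard} := by
  classical
  set M := Finset.univ.sup γ with hM
  apply Finite.of_injective
    (f := fun (F : {F : SVFilling n γ // F.IsSemistandard}) =>
      (fun (i : Fin n) (j : Fin (M + 1)) =>
        ((F.1.box i j).image (fun e => (⟨min e n, by omega⟩ : Fin (n + 1))))))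
  intro F G h
  have key : ∀ (H : {F : SVFilling n γ // F.IsSemistandard}) (i : Fin n) (j : ℕ), j ≤ γ i →
      ((H.1.box i j).image (fun e => (⟨min e n, by omega⟩ : Fin (n + 1)))).image Fin.val
        = H.1.box i j := by
    intro H i j hj
    rw [Finset.image_image]
    have : ∀ e ∈ H.1.box i j, (Fin.val ∘ fun e => (⟨min e n, by omega⟩ : Fin (n+1))) e = id e := by
      intro e he
      have hle : e ≤ (i : ℕ) + 1 := entry_le H.1 H.2 i j hj e he
      have : e ≤ n := by have := i.isLt; omega
      simp [Function.comp, min_eq_left this]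
    rw [Finset.image_congr this, Finset.image_id]
  apply Subtype.ext; apply box_injective; funext i j
  rcases le_or_gt j (γ i) with hj | hj
  · have hjM : j < M + 1 := by
      have : γ i ≤ M := Finset.le_sup (Finset.mem_univ i)
      omega
    have h2 := congrFun (congrFun h i) ⟨j, hjM⟩
    simp only at h2
    calc F.1.box i j = _ := (key F i j hj).symm
    _ = _ := by rw [h2]; exact key G i j hj
  · rw [F.1.outside i j hj, G.1.outside i j hj]


lemma sum_fin_indicator' (n : ℕ) (s : Finset ℕ)
    (hs : ∀ e ∈ s, 1 ≤ e ∧ e ≤ n) (f : ℕ → ℕ) :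
    (∑ i : Fin n, if (i : ℕ) + 1 ∈ s then f ((i : ℕ) + 1) else 0) = ∑ e ∈ s, f e := by
  classical
  rw [Fin.sum_univ_eq_sum_range (fun v => if v + 1 ∈ s then f (v + 1) else 0)]
  rw [← Finset.sum_filter]
  apply Finset.sum_nbij' (fun v => v + 1) (fun w => w - 1)
  · intro a ha; simp only [Finset.mem_filter] at ha; exact ha.2
  · intro b hb
    have hb2 := hs b hb
    simp only [Finset.mem_filter, Finset.mem_range]
    constructor
    · omega
    · rw [Nat.sub_add_cancel hb2.1]; exact hb
  · intro a _; omega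
  · intro b hb; have := hs b hb; omega
  · intro a _; rfl

lemma weighted_count (F : SVFilling n γ) (hF : F.IsSemistandard) (f : ℕ → ℕ) :
    (∑ i : Fin n, f ((i : ℕ) + 1) * F.content ((i : ℕ) + 1))
      = ∑ i : Fin n, ∑ j ∈ Finset.Icc 1 (γ i), ∑ e ∈ F.box i j, f e := by
  classical
  calc ∑ i : Fin n, f ((i:ℕ)+1) * F.content ((i:ℕ)+1)
      = ∑ i : Fin n, ∑ i' : Fin n, ∑ j ∈ Finset.Icc 1 (γ i'),
          (if (i:ℕ)+1 ∈ F.box i' j then f ((i:ℕ)+1) else 0) := by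
        apply Finset.sum_congr rfl; intro i _
        rw [content, Finset.mul_sum]
        apply Finset.sum_congr rfl; intro i' _
        rw [Finset.card_filter, Finset.mul_sum]
        apply Finset.sum_congr rfl; intro j _
        simp [mul_ite]
    _ = ∑ i' : Fin n, ∑ j ∈ Finset.Icc 1 (γ i'), ∑ i : Fin n,
          (if (i:ℕ)+1 ∈ F.box i' j then f ((i:ℕ)+1) else 0) := by
        rw [Finset.sum_comm]
        exact Finset.sum_congr rfl fun i' _ => Finset.sum_comm
    _ = _ := by
        apply Finset.sum_congr rfl; intro i' _
        apply Finset.sum_congr rfl; intro j hj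
        simp only [Finset.mem_Icc] at hj
        apply sum_fin_indicator'
        intro e he
        refine ⟨F.pos i' j e he, ?_⟩
        have h1 := entry_le F hF i' j hj.2 e he
        have := i'.isLt; omega

lemma sum_content_eq_size (F : SVFilling n γ) (hF : F.IsSemistandard) :
    (∑ i : Fin n, F.content ((i : ℕ) + 1)) = F.size := by
  have h := weighted_count F hF (fun _ => 1)
  simpa [size, ← Finset.card_eq_sum_ones] using h

lemma size_lower (F : SVFilling n γ) : (∑ i, γ i) ≤ F.size := by
  apply Finset.sum_le_sum
  intro i _
  calc γ i = ∑ _j ∈ Finset.Icc 1 (γ i), 1 := by simp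
  _ ≤ _ := Finset.sum_le_sum fun j hj => by
      simp only [Finset.mem_Icc] at hj
      exact Nat.one_le_iff_ne_zero.2 (Finset.card_ne_zero_of_mem
        (F.nonempty i j hj.1 hj.2).choose_spec)

lemma row_cards (F : SVFilling n γ) (hsize : F.size = ∑ i, γ i) :
    ∀ i : Fin n, (∑ j ∈ Finset.Icc 1 (γ i), (F.box i j).card) = γ i := by
  have hle : ∀ i ∈ Finset.univ (α := Fin n),
      γ i ≤ ∑ j ∈ Finset.Icc 1 (γ i), (F.box i j).card := by
    intro i _
    calc γ i = ∑ _j ∈ Finset.Icc 1 (γ i), 1 := by simp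
    _ ≤ _ := Finset.sum_le_sum fun j hj => by
        simp only [Finset.mem_Icc] at hj
        exact Nat.one_le_iff_ne_zero.2 (Finset.card_ne_zero_of_mem
          (F.nonempty i j hj.1 hj.2).choose_spec)
  have heq : (∑ i, γ i) = ∑ i : Fin n, ∑ j ∈ Finset.Icc 1 (γ i), (F.box i j).card :=
    hsize.symm
  intro i
  exact ((Finset.sum_eq_sum_iff_of_le hle).1 heq i (Finset.mem_univ i)).symm

lemma weight_le (F : SVFilling n γ) (hF : F.IsSemistandard) (hsize : F.size = ∑ i, γ i) :
    (∑ i : Fin n, ((i : ℕ) + 1) * F.content ((i : ℕ) + 1))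
      ≤ ∑ i : Fin n, ((i : ℕ) + 1) * γ i := by
  rw [weighted_count F hF (fun v => v)]
  apply Finset.sum_le_sum
  intro i _
  calc (∑ j ∈ Finset.Icc 1 (γ i), ∑ e ∈ F.box i j, e)
      ≤ ∑ j ∈ Finset.Icc 1 (γ i), ((i:ℕ)+1) * (F.box i j).card := by
        apply Finset.sum_le_sum
        intro j hj
        simp only [Finset.mem_Icc] at hj
        calc ∑ e ∈ F.box i j, e ≤ ∑ _e ∈ F.box i j, ((i:ℕ)+1) :=
              Finset.sum_le_sum fun e he => entry_le F hF i j hj.2 e he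
        _ = ((i:ℕ)+1) * (F.box i j).card := by rw [Finset.sum_const]; ring
  _ = ((i:ℕ)+1) * γ i := by rw [← Finset.mul_sum, row_cards F hsize i]

lemma weight_eq_boxes (F : SVFilling n γ) (hF : F.IsSemistandard)
    (hsize : F.size = ∑ i, γ i)
    (hw : (∑ i : Fin n, ((i : ℕ) + 1) * F.content ((i : ℕ) + 1))
      = ∑ i : Fin n, ((i : ℕ) + 1) * γ i) :
    ∀ i : Fin n, ∀ j : ℕ, 1 ≤ j → j ≤ γ i → F.box i j = {(i : ℕ) + 1} := by
  classical
  have hwc := weighted_count F hF (fun v => v)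
  -- row-level bound
  have hrow : ∀ i ∈ Finset.univ (α := Fin n),
      (∑ j ∈ Finset.Icc 1 (γ i), ∑ e ∈ F.box i j, e) ≤ ((i:ℕ)+1) * γ i := by
    intro i _
    calc (∑ j ∈ Finset.Icc 1 (γ i), ∑ e ∈ F.box i j, e)
        ≤ ∑ j ∈ Finset.Icc 1 (γ i), ((i:ℕ)+1) * (F.box i j).card := by
          apply Finset.sum_le_sum
          intro j hj
          simp only [Finset.mem_Icc] at hj
          calc ∑ e ∈ F.box i j, e ≤ ∑ _e ∈ F.box i j, ((i:ℕ)+1) :=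
                Finset.sum_le_sum fun e he => entry_le F hF i j hj.2 e he
          _ = ((i:ℕ)+1) * (F.box i j).card := by rw [Finset.sum_const]; ring
    _ = ((i:ℕ)+1) * γ i := by rw [← Finset.mul_sum, row_cards F hsize i]
  have hgl : (∑ i : Fin n, ∑ j ∈ Finset.Icc 1 (γ i), ∑ e ∈ F.box i j, e)
      = ∑ i : Fin n, ((i:ℕ)+1) * γ i := by rw [← hwc]; exact hw
  have hroweq := (Finset.sum_eq_sum_iff_of_le hrow).1 hgl
  intro i j h1 h2
  have hri := hroweq i (Finset.mem_univ i)
  -- box-level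
  have hboxle : ∀ j' ∈ Finset.Icc 1 (γ i),
      (∑ e ∈ F.box i j', e) ≤ ((i:ℕ)+1) * (F.box i j').card := by
    intro j' hj'
    simp only [Finset.mem_Icc] at hj'
    calc ∑ e ∈ F.box i j', e ≤ ∑ _e ∈ F.box i j', ((i:ℕ)+1) :=
          Finset.sum_le_sum fun e he => entry_le F hF i j' hj'.2 e he
    _ = ((i:ℕ)+1) * (F.box i j').card := by rw [Finset.sum_const]; ring
  have hsum2 : (∑ j' ∈ Finset.Icc 1 (γ i), ∑ e ∈ F.box i j', e)
      = ∑ j' ∈ Finset.Icc 1 (γ i), ((i:ℕ)+1) * (F.box i j').card := by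
    rw [hri, ← Finset.mul_sum, row_cards F hsize i]
  have hboxeq := (Finset.sum_eq_sum_iff_of_le hboxle).1 hsum2 j
    (Finset.mem_Icc.2 ⟨h1, h2⟩)
  -- entry-level
  have hentle : ∀ e ∈ F.box i j, e ≤ ((i:ℕ)+1) :=
    fun e he => entry_le F hF i j h2 e he
  have hsum3 : (∑ e ∈ F.box i j, e) = ∑ _e ∈ F.box i j, ((i:ℕ)+1) := by
    rw [hboxeq, Finset.sum_const]; ring
  have hent := (Finset.sum_eq_sum_iff_of_le (fun e he => hentle e he)).1 hsum3
  exact Finset.eq_singleton_iff_nonempty_unique_mem.2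
    ⟨F.nonempty i j h1 h2, fun e he => hent e he⟩


lemma content_of_boxes (F : SVFilling n γ)
    (hbox : ∀ i : Fin n, ∀ j : ℕ, 1 ≤ j → j ≤ γ i → F.box i j = {(i : ℕ) + 1}) (i : Fin n) :
    F.content ((i : ℕ) + 1) = γ i := by
  classical
  rw [content, Finset.sum_eq_single i]
  · rw [Finset.filter_true_of_mem, Nat.card_Icc]
    · omega
    · intro j hj
      simp only [Finset.mem_Icc] at hj
      rw [hbox i j hj.1 hj.2]
      simp
  · intro i' _ hne
    rw [Finset.filter_false_of_mem, Finset.card_empty]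
    intro j hj
    simp only [Finset.mem_Icc] at hj
    rw [hbox i' j hj.1 hj.2]
    simp only [Finset.mem_singleton]
    intro h
    exact hne (Fin.ext (by omega))
  · intro h; exact absurd (Finset.mem_univ i) h

def canonical (n : ℕ) (γ : Fin n → ℕ) : SVFilling n γ where
  box i j := if j ≤ γ i then {(i : ℕ) + 1} else ∅
  basement i := by simp
  nonempty i j _ h2 := by
    show (if j ≤ γ i then ({(i : ℕ) + 1} : Finset ℕ) else ∅).Nonempty
    rw [if_pos h2]
    exact Finset.singleton_nonempty _
  pos i j e he := by
    have he' : e ∈ (if j ≤ γ i then ({(i : ℕ) + 1} : Finset ℕ) else ∅) := he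
    by_cases h : j ≤ γ i
    · rw [if_pos h] at he'; simp only [Finset.mem_singleton] at he'; omega
    · rw [if_neg h] at he'; simp at he'
  outside i j h := if_neg (by omega)

lemma canonical_box {i : Fin n} {j : ℕ} (h : j ≤ γ i) :
    (canonical n γ).box i j = {(i : ℕ) + 1} := if_pos h

lemma canonical_anchor {i : Fin n} {j : ℕ} (h : j ≤ γ i) :
    (canonical n γ).anchor i j = (i : ℕ) + 1 := by
  rw [anchor, canonical_box h]; simp

lemma canonical_semistandard : (canonical n γ).IsSemistandard := by
  refine ⟨?_, ?_, ?_, ?_⟩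
  · intro j hj i i' hne e he he'
    by_cases h : j ≤ γ i
    · rw [canonical_box h] at he
      by_cases h' : j ≤ γ i'
      · rw [canonical_box h'] at he'
        simp only [Finset.mem_singleton] at he he'
        exact hne (Fin.ext (by omega))
      · rw [(canonical n γ).outside i' j (by omega)] at he'; simp at he'
    · rw [(canonical n γ).outside i j (by omega)] at he; simp at he
  · intro i j h1 h2 a ha b hb
    rw [canonical_box (by omega : j - 1 ≤ γ i)] at ha
    rw [canonical_box h2] at hb
    simp only [Finset.mem_singleton] at ha hb
    omega
  · intro i i' hlt
    have hii' : (i : ℕ) < (i' : ℕ) := hlt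
    constructor
    · intro hg m hm
      rw [canonical_anchor (show m + 1 ≤ γ i' from hm),
          canonical_anchor (show m + 1 ≤ γ i by omega),
          canonical_anchor (show m ≤ γ i by omega)]
      exact Or.inl ⟨by omega, le_refl _⟩
    · intro hg m hm hm'
      rw [canonical_anchor (show m ≤ γ i from hm),
          canonical_anchor (show m + 1 ≤ γ i' from hm'),
          canonical_anchor (show m ≤ γ i' by omega)]
      exact Or.inr ⟨le_refl _, by omega⟩
  · intro i j h1 h2 e he hne i' _ _
    rw [canonical_box h2] at he
    simp only [Finset.mem_singleton] at he
    intro _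
    exact hne (by rw [he, canonical_anchor h2])

lemma canonical_size : (canonical n γ).size = ∑ i, γ i := by
  rw [size]
  apply Finset.sum_congr rfl
  intro i _
  have hcard : ∀ j ∈ Finset.Icc 1 (γ i), ((canonical n γ).box i j).card = 1 := by
    intro j hj
    rw [canonical_box (Finset.mem_Icc.1 hj).2]
    rfl
  rw [Finset.sum_congr rfl hcard]
  simp

lemma eq_canonical (F : SVFilling n γ)
    (hbox : ∀ i : Fin n, ∀ j : ℕ, 1 ≤ j → j ≤ γ i → F.box i j = {(i : ℕ) + 1}) :
    F = canonical n γ := by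
  apply box_injective
  funext i j
  rcases Nat.eq_zero_or_pos j with h0 | h0
  · subst h0; rw [F.basement, (canonical n γ).basement]
  rcases le_or_gt j (γ i) with h | h
  · rw [hbox i j h0 h, canonical_box h]
  · rw [F.outside i j h, (canonical n γ).outside i j h]

theorem forced_shape {δ : Fin n → ℕ} (F : SVFilling n γ) (hF : F.IsSemistandard)
    (hc : ∀ i : Fin n, F.content ((i : ℕ) + 1) = δ i)
    (hsz : F.size ≤ ∑ i, γ i)
    (hwge : (∑ i : Fin n, ((i : ℕ) + 1) * γ i) ≤ ∑ i : Fin n, ((i : ℕ) + 1) * δ i) :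
    δ = γ ∧ F = canonical n γ := by
  have hsz' : F.size = ∑ i, γ i := le_antisymm hsz (size_lower F)
  have hwle := weight_le F hF hsz'
  have hδw : (∑ i : Fin n, ((i : ℕ) + 1) * F.content ((i : ℕ) + 1))
      = ∑ i : Fin n, ((i : ℕ) + 1) * δ i :=
    Finset.sum_congr rfl fun i _ => by rw [hc i]
  have hw : (∑ i : Fin n, ((i : ℕ) + 1) * F.content ((i : ℕ) + 1))
      = ∑ i : Fin n, ((i : ℕ) + 1) * γ i := le_antisymm hwle (hδw ▸ hwge)
  have hboxes := weight_eq_boxes F hF hsz' hw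
  have hδ : δ = γ := funext fun i => by rw [← hc i, content_of_boxes F hboxes i]
  exact ⟨hδ, eq_canonical F hboxes⟩

lemma canonical_content (i : Fin n) : (canonical n γ).content ((i : ℕ) + 1) = γ i :=
  content_of_boxes _ (fun i j _ hj => canonical_box hj) i

end SVFilling

lemma Lascoux_coeff_ne (n : ℕ) (γ δ : Fin n → ℕ)
    (h : (Polynomial.coeff
        (MvPolynomial.coeff (Finsupp.equivFunOnFinite.symm δ) (Lascoux n γ)) 0) ≠ 0) :
    ∃ F : SVFilling n γ, F.IsSemistandard ∧ (∀ i : Fin n, F.content ((i : ℕ) + 1) = δ i) ∧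
      F.size ≤ ∑ i, γ i := by
  classical
  have : Fintype {F : SVFilling n γ // F.IsSemistandard} := Fintype.ofFinite _
  rw [Lascoux, finsum_eq_sum_of_fintype, MvPolynomial.coeff_sum,
    Polynomial.finset_sum_coeff] at h
  obtain ⟨F, _, hF⟩ := Finset.exists_ne_zero_of_sum_ne_zero h
  rw [MvPolynomial.coeff_monomial] at hF
  by_cases hcond : Finsupp.equivFunOnFinite.symm
      (fun i : Fin n => (F : SVFilling n γ).content ((i : ℕ) + 1))
      = Finsupp.equivFunOnFinite.symm δ
  · rw [if_pos hcond, Polynomial.coeff_X_pow] at hF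
    have he : (F : SVFilling n γ).size - ∑ i, γ i = 0 := by
      by_contra hne
      rw [if_neg (fun hh => hne hh.symm)] at hF
      exact hF rfl
    have hfun := Finsupp.equivFunOnFinite.symm.injective hcond
    exact ⟨F.1, F.2, fun i => congrFun hfun i, Nat.sub_eq_zero_iff_le.1 he⟩
  · rw [if_neg hcond, Polynomial.coeff_zero] at hF
    exact absurd rfl hF

lemma Lascoux_coeff_self (n : ℕ) (γ : Fin n → ℕ) :
    Polynomial.coeff
      (MvPolynomial.coeff (Finsupp.equivFunOnFinite.symm γ) (Lascoux n γ)) 0 = 1 := by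
  classical
  have : Fintype {F : SVFilling n γ // F.IsSemistandard} := Fintype.ofFinite _
  rw [Lascoux, finsum_eq_sum_of_fintype, MvPolynomial.coeff_sum,
    Polynomial.finset_sum_coeff]
  rw [Finset.sum_eq_single_of_mem
    (⟨SVFilling.canonical n γ, SVFilling.canonical_semistandard⟩ :
      {F : SVFilling n γ // F.IsSemistandard}) (Finset.mem_univ _)]
  · rw [MvPolynomial.coeff_monomial, if_pos, SVFilling.canonical_size, Nat.sub_self,
      pow_zero, Polynomial.coeff_one_zero]
    congr 1
    funext i
    exact SVFilling.canonical_content i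
  · intro F _ hne
    rw [MvPolynomial.coeff_monomial]
    by_cases hcond : Finsupp.equivFunOnFinite.symm
        (fun i : Fin n => (F : SVFilling n γ).content ((i : ℕ) + 1))
        = Finsupp.equivFunOnFinite.symm γ
    · rw [if_pos hcond, Polynomial.coeff_X_pow]
      rw [if_neg]
      intro he
      have hfun := Finsupp.equivFunOnFinite.symm.injective hcond
      have hforced := SVFilling.forced_shape F.1 F.2
        (fun i => congrFun hfun i) (Nat.sub_eq_zero_iff_le.1 he.symm) (le_refl _)
      exact hne (Subtype.ext hforced.2)
    · rw [if_neg hcond, Polynomial.coeff_zero]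

/-- The Lascoux atoms `{L_γ}`, indexed by weak compositions `γ` with `n`
parts, are linearly independent over `ℤ[β]`: any finitely supported `ℤ[β]`-linear
combination of them that vanishes has all coefficients zero. -/
theorem stmt5 (n : ℕ) (hn : 1 ≤ n) :
    ∀ c : (Fin n → ℕ) →₀ Polynomial ℤ,
      (c.sum fun γ p => MvPolynomial.C p * Lascoux n γ) = 0 → c = 0 := by
  classical
  intro c hc
  by_contra hc0
  have hsupp : c.support.Nonempty := Finsupp.support_nonempty_iff.2 hc0
  set k : ℕ := c.support.inf' hsupp (fun γ => (c γ).natTrailingDegree) with hk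
  obtain ⟨γ₀, hγ₀mem, hγ₀⟩ :=
    Finset.exists_mem_eq_inf' hsupp (fun γ => (c γ).natTrailingDegree)
  set S₀ : Finset (Fin n → ℕ) := c.support.filter (fun γ => (c γ).coeff k ≠ 0) with hS₀def
  have hγ₀S : γ₀ ∈ S₀ := by
    rw [hS₀def, Finset.mem_filter]
    refine ⟨hγ₀mem, ?_⟩
    rw [hk, hγ₀]
    exact fun h => (Finsupp.mem_support_iff.1 hγ₀mem) (Polynomial.trailingCoeff_eq_zero.1 h)
  obtain ⟨γs, hγsS, hmax⟩ :=
    S₀.exists_max_image (fun γ => ∑ i : Fin n, ((i : ℕ) + 1) * γ i) ⟨γ₀, hγ₀S⟩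
  have hγsmem : γs ∈ c.support := (Finset.mem_filter.1 hγsS).1
  have hγsne : (c γs).coeff k ≠ 0 := (Finset.mem_filter.1 hγsS).2
  set μ : (Fin n) →₀ ℕ := Finsupp.equivFunOnFinite.symm γs with hμ
  have h1 : (∑ γ ∈ c.support, (c γ) * MvPolynomial.coeff μ (Lascoux n γ)) = 0 := by
    have h := congrArg (MvPolynomial.coeff μ) hc
    rw [Finsupp.sum, MvPolynomial.coeff_sum] at h
    simp only [MvPolynomial.coeff_C_mul, MvPolynomial.coeff_zero] at h
    exact h
  have h2 : (∑ γ ∈ c.support,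
      ((c γ).coeff k) * ((MvPolynomial.coeff μ (Lascoux n γ)).coeff 0)) = 0 := by
    have h := congrArg (fun p : Polynomial ℤ => p.coeff k) h1
    simp only [Polynomial.finset_sum_coeff, Polynomial.coeff_zero] at h
    rw [← h]
    apply Finset.sum_congr rfl
    intro γ hγ
    rw [Polynomial.coeff_mul, Finset.sum_eq_single ((k, 0) : ℕ × ℕ)]
    · intro p hp hne
      have hpk := Finset.HasAntidiagonal.mem_antidiagonal.1 hp
      have hlt : p.1 < k := by
        rcases Nat.lt_or_ge p.1 k with h' | h'
        · exact h'
        · exfalso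
          apply hne
          have h1' : p.1 = k := by omega
          have h2' : p.2 = 0 := by omega
          exact Prod.ext h1' h2'
      have hk_le : k ≤ (c γ).natTrailingDegree := by
        rw [hk]; exact Finset.inf'_le _ hγ
      rw [Polynomial.coeff_eq_zero_of_lt_natTrailingDegree (lt_of_lt_of_le hlt hk_le),
        zero_mul]
    · intro habs
      exact absurd (Finset.HasAntidiagonal.mem_antidiagonal.2 (by simp)) habs
  have hredux : ∀ γ ∈ c.support, γ ≠ γs →
      ((c γ).coeff k) * ((MvPolynomial.coeff μ (Lascoux n γ)).coeff 0) = 0 := by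
    intro γ hγ hne
    by_cases hck : (c γ).coeff k = 0
    · rw [hck, zero_mul]
    have hγS : γ ∈ S₀ := Finset.mem_filter.2 ⟨hγ, hck⟩
    have hL : (MvPolynomial.coeff μ (Lascoux n γ)).coeff 0 = 0 := by
      by_contra hLne
      rw [hμ] at hLne
      obtain ⟨F, hFss, hFc, hFs⟩ := Lascoux_coeff_ne n γ γs hLne
      have hforced := SVFilling.forced_shape F hFss hFc hFs (hmax γ hγS)
      exact hne hforced.1.symm
    rw [hL, mul_zero]
  rw [Finset.sum_eq_single_of_mem γs hγsmem hredux, hμ, Lascoux_coeff_self n γs,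
    mul_one] at h2
  exact hγsne h2
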